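/- All directional derivatives of Q ↦ I_Q(T:X|Y) along the vectors γ_{t;x,x';y,y'} vanish at a strictly positive joint distribution Q if and only if, for every t with Q(T=t) > 0, the matrix (Q(t|x,y))_{x∈𝒳, y∈𝒴} has rank one. -/

import Mathlib

open scoped BigOperators
open Matrix
noncomputable section

variable {T X Y : Type*}

/-- A joint probability distribution of `(T,X,Y)`, as a function `T → X → Y → ℝ`. -/
def IsDist [Fintype T] [Fintype X] [Fintype Y] (P : T → X → Y → ℝ) : Prop :=
  (∀ t x y, 0 ≤ P t x y) ∧ ∑ t, ∑ x, ∑ y, P t x y = 1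

/-- The `(T,X)`-marginal. -/
def margTX [Fintype Y] (P : T → X → Y → ℝ) (t : T) (x : X) : ℝ := ∑ y, P t x y

/-- The `(T,Y)`-marginal. -/
def margTY [Fintype X] (P : T → X → Y → ℝ) (t : T) (y : Y) : ℝ := ∑ x, P t x y

/-- The `(X,Y)`-marginal. -/
def margXY [Fintype T] (P : T → X → Y → ℝ) (x : X) (y : Y) : ℝ := ∑ t, P t x y

/-- The `T`-marginal. -/
def margT [Fintype X] [Fintype Y] (P : T → X → Y → ℝ) (t : T) : ℝ := ∑ x, ∑ y, P t x y

/-- The `Y`-marginal. -/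
def margY [Fintype T] [Fintype X] (P : T → X → Y → ℝ) (y : Y) : ℝ := ∑ t, ∑ x, P t x y

/-- `Δ_P`: the polytope of joint distributions with the same `(T,X)`- and
`(T,Y)`-marginals as `P`. -/
def deltaP [Fintype T] [Fintype X] [Fintype Y] (P : T → X → Y → ℝ) :
    Set (T → X → Y → ℝ) :=
  {Q | IsDist Q ∧ (∀ t x, margTX Q t x = margTX P t x) ∧
    (∀ t y, margTY Q t y = margTY P t y)}

/-- The conditional entropy `H_Q(T|X,Y)` (with the convention `0 log 0 = 0`,
automatic since `Real.log 0 = 0`). -/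
def condEntTXY [Fintype T] [Fintype X] [Fintype Y] (Q : T → X → Y → ℝ) : ℝ :=
  ∑ t, ∑ x, ∑ y, -(Q t x y * Real.log (Q t x y / margXY Q x y))

/-- The conditional mutual information `I_Q(T:X|Y)`. -/
def CMI [Fintype T] [Fintype X] [Fintype Y] (Q : T → X → Y → ℝ) : ℝ :=
  ∑ t, ∑ x, ∑ y,
    Q t x y * Real.log (Q t x y * margY Q y / (margTY Q t y * margXY Q x y))

/-- A positive matrix whose 2×2 minors all vanish has rank one. -/
lemma aux_rank_one_of_minors {X Y : Type*} [Fintype X] [Fintype Y] [Nonempty X] [Nonempty Y]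
    (M : Matrix X Y ℝ) (hpos : ∀ x y, 0 < M x y)
    (h : ∀ x x' y y', M x y * M x' y' = M x y' * M x' y) : M.rank = 1 := by
  obtain ⟨x0⟩ := ‹Nonempty X›
  obtain ⟨y0⟩ := ‹Nonempty Y›
  have hspan : Submodule.span ℝ (Set.range Mᵀ) = Submodule.span ℝ {Mᵀ y0} := by
    apply le_antisymm
    · rw [Submodule.span_le]
      rintro _ ⟨y, rfl⟩
      rw [SetLike.mem_coe, Submodule.mem_span_singleton]
      refine ⟨M x0 y / M x0 y0, ?_⟩
      funext x
      have := h x x0 y0 y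
      have h1 := (hpos x0 y0).ne'
      simp only [Pi.smul_apply, smul_eq_mul, Matrix.transpose_apply]
      field_simp
      linear_combination this
    · exact Submodule.span_mono (Set.singleton_subset_iff.mpr ⟨y0, rfl⟩)
  rw [Matrix.rank_eq_finrank_span_cols, show M.col = Mᵀ from rfl, hspan]
  exact finrank_span_singleton (fun hc => by
    have := congrFun hc x0
    simp only [Matrix.transpose_apply, Pi.zero_apply] at this
    exact (hpos x0 y0).ne' this)

/-- A positive matrix of rank one has all 2×2 minors vanishing. -/
lemma aux_minors_of_rank_one {X Y : Type*} [Fintype X] [Fintype Y]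
    (M : Matrix X Y ℝ) (hpos : ∀ x y, 0 < M x y) (h : M.rank = 1) :
    ∀ x x' y y', M x y * M x' y' = M x y' * M x' y := by
  intro x x' y y'
  have hW : Module.finrank ℝ (Submodule.span ℝ (Set.range Mᵀ)) = 1 := by
    exact (Matrix.rank_eq_finrank_span_cols M).symm.trans h
  have hdep : ¬ LinearIndependent ℝ ![Mᵀ y, Mᵀ y'] := by
    intro hli
    have hcard := finrank_span_eq_card hli
    have hle : Submodule.span ℝ (Set.range ![Mᵀ y, Mᵀ y']) ≤
        Submodule.span ℝ (Set.range Mᵀ) := by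
      apply Submodule.span_mono
      rintro _ ⟨i, rfl⟩
      fin_cases i <;> exact Set.mem_range_self _
    have := Submodule.finrank_mono hle
    rw [hcard, hW] at this
    simp at this
  rw [LinearIndependent.pair_iff] at hdep
  push_neg at hdep
  obtain ⟨s, t, hst, hne⟩ := hdep
  have hev : ∀ z, s * M z y + t * M z y' = 0 := by
    intro z
    have := congrFun hst z
    simpa [Matrix.transpose_apply] using this
  have hs : s ≠ 0 := by
    rintro rfl
    have ht : t ≠ 0 := by rintro rfl; exact hne rfl rfl
    have := hev x
    simp at this
    rcases this with h' | h'
    · exact ht h'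
    · exact (hpos x y').ne' h'
  have e1 := hev x
  have e2 := hev x'
  have hx : M x y = (-t / s) * M x y' := by field_simp; linarith
  have hx' : M x' y = (-t / s) * M x' y' := by field_simp; linarith
  rw [hx, hx']; ring

/-- At a strictly positive joint distribution `Q`, all directional derivatives of
`Q ↦ I_Q(T:X|Y)` along the vectors `γ_{t;x,x';y,y'}` (which equal
`log (Q(t|x,y) Q(t|x',y') / (Q(t|x,y') Q(t|x',y)))`) vanish if and only if, for every
`t` with `Q(T=t) > 0`, the matrix `(Q(t|x,y))_{x,y}` has rank one. -/
theorem derivatives_vanish_iff_rank_one [Fintype T] [Fintype X] [Fintype Y]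
    [DecidableEq X] [DecidableEq Y]
    (Q : T → X → Y → ℝ) (hQ : IsDist Q)
    (hpos : ∀ t, 0 < margT Q t → ∀ x y, 0 < Q t x y) :
    (∀ (t : T) (x x' : X) (y y' : Y),
        Real.log ((Q t x y / margXY Q x y) * (Q t x' y' / margXY Q x' y') /
          ((Q t x y' / margXY Q x y') * (Q t x' y / margXY Q x' y))) = 0) ↔
      ∀ t, 0 < margT Q t →
        (Matrix.of fun x y => Q t x y / margXY Q x y : Matrix X Y ℝ).rank = 1 := by
  obtain ⟨hnn, hsum⟩ := hQ
  have hTne : Nonempty T := by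
    by_contra hc; rw [not_nonempty_iff] at hc; simp at hsum
  have hXne : Nonempty X := by
    by_contra hc; rw [not_nonempty_iff] at hc; simp at hsum
  have hYne : Nonempty Y := by
    by_contra hc; rw [not_nonempty_iff] at hc; simp at hsum
  have ht0 : ∃ t0, 0 < margT Q t0 := by
    by_contra hc
    push_neg at hc
    have : ∑ t, margT Q t ≤ 0 := Finset.sum_nonpos fun t _ => hc t
    have h1 : ∑ t, margT Q t = 1 := by simpa [margT] using hsum
    linarith
  have hXY : ∀ x y, 0 < margXY Q x y := by
    intro x y
    obtain ⟨t0, ht0⟩ := ht0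
    have hle : Q t0 x y ≤ ∑ t, Q t x y :=
      Finset.single_le_sum (fun i _ => hnn i x y) (Finset.mem_univ t0)
    exact lt_of_lt_of_le (hpos t0 ht0 x y) hle
  have hzero : ∀ t, ¬ 0 < margT Q t → ∀ x y, Q t x y = 0 := by
    intro t ht x y
    have h0 : margT Q t = 0 :=
      le_antisymm (not_lt.mp ht)
        (Finset.sum_nonneg fun x _ => Finset.sum_nonneg fun y _ => hnn t x y)
    have hle : ∑ y, Q t x y ≤ margT Q t :=
      Finset.single_le_sum (f := fun i => ∑ y, Q t i y)
        (fun i _ => Finset.sum_nonneg fun y _ => hnn t i y) (Finset.mem_univ x)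
    have hge : 0 ≤ ∑ y, Q t x y := Finset.sum_nonneg fun y _ => hnn t x y
    have h1 : ∑ y, Q t x y = 0 := by linarith
    exact (Finset.sum_eq_zero_iff_of_nonneg fun y _ => hnn t x y).mp h1 y (Finset.mem_univ y)
  constructor
  · intro h t ht
    have hMpos : ∀ x y, 0 < Q t x y / margXY Q x y :=
      fun x y => div_pos (hpos t ht x y) (hXY x y)
    refine aux_rank_one_of_minors _ hMpos ?_
    intro x x' y y'
    simp only [Matrix.of_apply]
    have hden : 0 < (Q t x y' / margXY Q x y') * (Q t x' y / margXY Q x' y) :=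
      mul_pos (hMpos x y') (hMpos x' y)
    have hnum : 0 < (Q t x y / margXY Q x y) * (Q t x' y' / margXY Q x' y') :=
      mul_pos (hMpos x y) (hMpos x' y')
    have harg : 0 < (Q t x y / margXY Q x y) * (Q t x' y' / margXY Q x' y') /
        ((Q t x y' / margXY Q x y') * (Q t x' y / margXY Q x' y)) := div_pos hnum hden
    have hl := h t x x' y y'
    rw [Real.log_eq_zero] at hl
    rcases hl with hl | hl | hl
    · exact absurd hl harg.ne'
    · exact (div_eq_one_iff_eq hden.ne').mp hl
    · linarith
  · intro h t x x' y y'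
    by_cases ht : 0 < margT Q t
    · have hMpos : ∀ x y, 0 < Q t x y / margXY Q x y :=
        fun x y => div_pos (hpos t ht x y) (hXY x y)
      have hm := aux_minors_of_rank_one _ hMpos (h t ht) x x' y y'
      have hden : 0 < (Q t x y' / margXY Q x y') * (Q t x' y / margXY Q x' y) :=
        mul_pos (hMpos x y') (hMpos x' y)
      rw [hm, div_self hden.ne', Real.log_one]
    · rw [hzero t ht x y, hzero t ht x' y']
      simp
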